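/- Let n ≥ 1 be an integer and let y > 1. Then ∑_{l=0}^∞ (Γ(n+l/2)/Γ(1+l/2)) (−1/y)^l = ∫₀^∞ ∫₀^∞ s^{n−1} e^{−s − y^{−1} s^{1/2} t^{−1/2}} f_{1/2}(t) dt ds, where f_{1/2}(t) = (2√π)^{−1} t^{−3/2} e^{−1/(4t)} for t > 0, and the series on the left converges absolutely. -/

import Mathlib

open MeasureTheory Real Set

/-- The density `f_{1/2}(t) = (2√π)^{−1} t^{−3/2} e^{−1/(4t)}` of the positive stable
law of index 1/2. -/
noncomputable def stableHalf (t : ℝ) : ℝ :=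
  (2 * Real.sqrt π)⁻¹ * t ^ (-(3 / 2) : ℝ) * Real.exp (-1 / (4 * t))

lemma stableHalf_nonneg {t : ℝ} (ht : 0 ≤ t) : 0 ≤ stableHalf t := by
  unfold stableHalf
  have h1 : (0:ℝ) ≤ (2 * Real.sqrt π)⁻¹ := by positivity
  exact mul_nonneg (mul_nonneg h1 (Real.rpow_nonneg ht _)) (Real.exp_nonneg _)

lemma real_exp_tsum (x : ℝ) : Real.exp x = ∑' n : ℕ, x ^ n / n.factorial := by
  rw [Real.exp_eq_exp_ℝ, NormedSpace.exp_eq_tsum (𝕂 := ℝ)]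
  simp [div_eq_inv_mul, smul_eq_mul]

/-- Legendre duplication formula, specialized. -/
lemma dup (l : ℕ) : (2:ℝ) ^ l * (Real.Gamma (((l : ℝ) + 1) / 2) * Real.Gamma ((l : ℝ) / 2 + 1))
    = Real.sqrt π * l.factorial := by
  have h := Real.Gamma_mul_Gamma_add_half (((l : ℝ) + 1) / 2)
  have h1 : ((l : ℝ) + 1) / 2 + 1 / 2 = (l : ℝ) / 2 + 1 := by ring
  have h2 : 2 * (((l : ℝ) + 1) / 2) = (l : ℝ) + 1 := by ring
  rw [h1, h2] at h
  have h3 : Real.Gamma ((l : ℝ) + 1) = l.factorial := by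
    exact_mod_cast Real.Gamma_nat_eq_factorial l
  have h4 : (2 : ℝ) ^ ((1:ℝ) - ((l : ℝ) + 1)) = ((2 : ℝ) ^ l)⁻¹ := by
    rw [show (1 : ℝ) - ((l : ℝ) + 1) = -(l : ℝ) by ring, Real.rpow_neg (by norm_num),
      Real.rpow_natCast]
  rw [h, h3, h4]
  have : (2:ℝ) ^ l ≠ 0 := by positivity
  field_simp

lemma key_const (l : ℕ) :
    (2 * Real.sqrt π)⁻¹ * ((4 : ℝ) ^ ((l:ℝ)/2 + 1/2) * Real.Gamma ((l:ℝ)/2 + 1/2)) / l.factorial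
      = (Real.Gamma ((l:ℝ)/2 + 1))⁻¹ := by
  have h12 : (l:ℝ)/2 + 1/2 = ((l:ℝ)+1)/2 := by ring
  rw [h12]
  have h4 : (4:ℝ) ^ (((l:ℝ)+1)/2) = 2 * 2^l := by
    have e0 : (4:ℝ) = (2:ℝ) ^ (2:ℝ) := by rw [Real.rpow_two]; norm_num
    have e1 : ((2:ℝ) ^ (2:ℝ)) ^ (((l:ℝ)+1)/2) = (2:ℝ) ^ ((2:ℝ) * (((l:ℝ)+1)/2)) :=
      (Real.rpow_mul (by norm_num) _ _).symm
    have e2 : (2:ℝ) * (((l:ℝ)+1)/2) = (l:ℝ) + 1 := by ring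
    rw [e0, e1, e2, Real.rpow_add (by norm_num), Real.rpow_one, Real.rpow_natCast]
    ring
  rw [h4]
  have hdup := dup l
  have hg1 : 0 < Real.Gamma (((l:ℝ)+1)/2) := Real.Gamma_pos_of_pos (by positivity)
  have hg2 : 0 < Real.Gamma ((l:ℝ)/2 + 1) := Real.Gamma_pos_of_pos (by positivity)
  have hsp : 0 < Real.sqrt π := Real.sqrt_pos.mpr Real.pi_pos
  have hlf : (0:ℝ) < l.factorial := by exact_mod_cast l.factorial_pos
  rw [show (l:ℝ)/2 + 1 = ((l:ℝ)+2)/2 by ring] at hdup hg2 ⊢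
  field_simp
  linear_combination hdup

lemma subst_ptwise (a : ℝ) {x : ℝ} (hx : 0 < x) :
    (|(-1 : ℝ)| * x ^ ((-1 : ℝ) - 1)) • ((x ^ (-1 : ℝ)) ^ (-a) * stableHalf (x ^ (-1 : ℝ)))
      = (2 * Real.sqrt π)⁻¹ * (x ^ (a + 1 / 2 - 1) * Real.exp (-(1 / 4 * x))) := by
  have hx0 : x ≠ 0 := ne_of_gt hx
  have hxle : (0:ℝ) ≤ x := hx.le
  rw [smul_eq_mul]
  unfold stableHalf
  rw [← Real.rpow_mul hxle, ← Real.rpow_mul hxle]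
  have hexp : -1 / (4 * x ^ (-1 : ℝ)) = -(1 / 4 * x) := by
    rw [Real.rpow_neg_one]; field_simp
  rw [hexp]
  rw [abs_neg, abs_one, one_mul]
  have e1 : (-1:ℝ) * -a = a := by ring
  have e2 : (-1:ℝ) * -(3/2) = (3/2 : ℝ) := by ring
  rw [e1, e2]
  have : x ^ ((-1:ℝ)-1) * (x ^ a * ((2 * Real.sqrt π)⁻¹ * x ^ ((3:ℝ)/2) * Real.exp (-(1 / 4 * x))))
      = (2 * Real.sqrt π)⁻¹ * ((x ^ ((-1:ℝ)-1) * x ^ a * x ^ ((3:ℝ)/2)) * Real.exp (-(1 / 4 * x))) := by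
    ring
  rw [this, ← Real.rpow_add hx, ← Real.rpow_add hx]
  norm_num
  left
  congr 1
  ring

lemma moment (a : ℝ) (ha : 0 ≤ a) :
    ∫ t in Ioi (0:ℝ), t ^ (-a) * stableHalf t
      = (2 * Real.sqrt π)⁻¹ * ((4 : ℝ) ^ (a + 1 / 2) * Real.Gamma (a + 1 / 2)) := by
  have h0 : (0:ℝ) < a + 1/2 := by linarith
  rw [← integral_comp_rpow_Ioi (fun t => t ^ (-a) * stableHalf t) (by norm_num : (-1:ℝ) ≠ 0)]
  rw [setIntegral_congr_fun measurableSet_Ioi (fun x hx => subst_ptwise a hx)]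
  rw [integral_const_mul, integral_rpow_mul_exp_neg_mul_Ioi h0 (by norm_num : (0:ℝ) < 1/4)]
  norm_num

lemma moment_integrable (a : ℝ) (ha : 0 ≤ a) :
    IntegrableOn (fun t => t ^ (-a) * stableHalf t) (Ioi (0:ℝ)) := by
  rw [← integrableOn_Ioi_comp_rpow_iff (fun t => t ^ (-a) * stableHalf t)
    (by norm_num : (-1:ℝ) ≠ 0)]
  have base := integrableOn_rpow_mul_exp_neg_mul_rpow (by linarith : (-1:ℝ) < a + 1/2 - 1)
    (by norm_num : (0:ℝ) < 1) (by norm_num : (0:ℝ) < 1/4)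
  have key : IntegrableOn
      (fun x : ℝ => (2 * Real.sqrt π)⁻¹ * (x ^ (a + 1/2 - 1) * Real.exp (-(1/4 * x))))
      (Ioi (0:ℝ)) := by
    apply Integrable.const_mul
    apply base.congr_fun _ measurableSet_Ioi
    intro x hx
    simp only [Real.rpow_one]
    ring_nf
  exact key.congr_fun (fun x hx => (subst_ptwise a hx).symm) measurableSet_Ioi

lemma gamma_ge (m : ℕ) : (m.factorial : ℝ) * (Real.sqrt π / 2) ≤ Real.Gamma ((m : ℝ) + 3/2) := by
  induction m with
  | zero =>
    simp only [Nat.factorial_zero, Nat.cast_one, Nat.cast_zero, one_mul, zero_add]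
    rw [show (3:ℝ)/2 = 1/2 + 1 by norm_num, Real.Gamma_add_one (by norm_num),
      Real.Gamma_one_half_eq]
    nlinarith [Real.sqrt_nonneg π]
  | succ m ih =>
    have h1 : ((m:ℝ) + 1) + 3/2 = ((m:ℝ) + 3/2) + 1 := by ring
    rw [Nat.factorial_succ]
    push_cast
    rw [h1, Real.Gamma_add_one (by positivity)]
    have h2 : ((m:ℝ) + 1) ≤ (m:ℝ) + 3/2 := by linarith
    have h3 : (0:ℝ) ≤ (m.factorial : ℝ) * (Real.sqrt π / 2) := by positivity
    calc ((m:ℝ)+1) * m.factorial * (Real.sqrt π / 2)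
        = ((m:ℝ)+1) * ((m.factorial : ℝ) * (Real.sqrt π / 2)) := by ring
      _ ≤ ((m:ℝ) + 3/2) * Real.Gamma ((m:ℝ) + 3/2) := by
          apply mul_le_mul h2 ih h3 (by positivity)

lemma ml_summable {c : ℝ} (hc : 0 ≤ c) :
    Summable (fun l : ℕ => c ^ l / Real.Gamma ((l : ℝ) / 2 + 1)) := by
  apply Summable.even_add_odd
  · apply (Real.summable_pow_div_factorial (c^2)).congr
    intro m
    have : ((2 * m : ℕ) : ℝ) / 2 + 1 = (m : ℝ) + 1 := by push_cast; ring
    rw [this, show ((m:ℝ) + 1) = ((m:ℕ) : ℝ) + 1 by norm_num, Real.Gamma_nat_eq_factorial,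
      pow_mul]
  · refine Summable.of_nonneg_of_le (fun m => by positivity) (fun m => ?_)
      ((Real.summable_pow_div_factorial (c^2)).mul_left (2 * c / Real.sqrt π))
    have h1 : ((2 * m + 1 : ℕ) : ℝ) / 2 + 1 = (m : ℝ) + 3/2 := by push_cast; ring
    rw [h1]
    have h2 := gamma_ge m
    have h3 : (0:ℝ) < (m.factorial : ℝ) * (Real.sqrt π / 2) := by positivity
    have h4 : (0:ℝ) < Real.Gamma ((m:ℝ) + 3/2) := by positivity
    rw [div_le_iff₀ h4]
    have hsp : Real.sqrt π ≠ 0 := by positivity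
    have hmf : (m.factorial : ℝ) ≠ 0 := by positivity
    have key : (2 * c / Real.sqrt π) * ((c^2)^m / m.factorial)
          * ((m.factorial : ℝ) * (Real.sqrt π / 2)) = c ^ (2*m+1) := by
      conv_rhs => rw [pow_succ, pow_mul]
      field_simp
    calc c ^ (2*m+1) = (2 * c / Real.sqrt π) * ((c^2)^m / m.factorial)
          * ((m.factorial : ℝ) * (Real.sqrt π / 2)) := key.symm
      _ ≤ (2 * c / Real.sqrt π) * ((c^2)^m / m.factorial) * Real.Gamma ((m:ℝ) + 3/2) := by
        apply mul_le_mul_of_nonneg_left h2 (by positivity)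

lemma gamma_prod (x : ℝ) (hx : 0 < x) (m : ℕ) :
    Real.Gamma (x + m) = Real.Gamma x * ∏ k ∈ Finset.range m, (x + k) := by
  induction m with
  | zero => simp
  | succ m ih =>
    have h1 : x + ((m:ℕ)+1 : ℕ) = (x + m) + 1 := by push_cast; ring
    rw [h1, Real.Gamma_add_one (by positivity), ih, Finset.prod_range_succ]
    ring

lemma part1 (n : ℕ) (hn : 1 ≤ n) {r : ℝ} (hr0 : 0 ≤ r) (hr1 : r < 1) :
    Summable (fun l : ℕ =>
      Real.Gamma ((n : ℝ) + l / 2) / Real.Gamma (1 + l / 2) * r ^ l) := by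
  have hprod : ∀ l : ℕ, Real.Gamma ((n : ℝ) + l / 2) / Real.Gamma (1 + l / 2)
      = ∏ k ∈ Finset.range (n-1), (1 + (l:ℝ)/2 + k) := by
    intro l
    have hx : (0:ℝ) < 1 + (l:ℝ)/2 := by positivity
    have h := gamma_prod (1 + (l:ℝ)/2) hx (n-1)
    have hc : (1 + (l:ℝ)/2) + ((n-1 : ℕ) : ℝ) = (n:ℝ) + (l:ℝ)/2 := by
      rw [Nat.cast_sub hn]; push_cast; ring
    rw [hc] at h
    rw [h, mul_comm, mul_div_assoc, div_self (Real.Gamma_pos_of_pos hx).ne', mul_one]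
  have hgeo : Summable (fun m : ℕ => (m:ℝ)^(n-1) * r^m) :=
    summable_pow_mul_geometric_of_norm_lt_one (n-1) (by rwa [Real.norm_eq_abs, abs_of_nonneg hr0])
  have hshift : Summable (fun l : ℕ => ((l:ℝ)+n)^(n-1) * r^(l+n)) := by
    have := hgeo.comp_injective (add_left_injective n)
    apply this.congr
    intro l
    simp [Function.comp]
  have hshift2 : Summable (fun l : ℕ => ((l:ℝ)+n)^(n-1) * r^l) := by
    rcases hr0.eq_or_lt with h | hrpos
    · apply (summable_nat_add_iff 1).mp
      simpa [← h, pow_succ] using (summable_zero : Summable (fun _ : ℕ => (0:ℝ)))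
    have hrn : (r^n) ≠ 0 := by positivity
    have := hshift.mul_left (r^n)⁻¹
    apply this.congr
    intro l
    rw [pow_add]
    field_simp
  apply Summable.of_nonneg_of_le ?_ ?_ hshift2
  · intro l
    rw [hprod l]
    positivity
  · intro l
    rw [hprod l]
    apply mul_le_mul_of_nonneg_right ?_ (pow_nonneg hr0 l)
    calc ∏ k ∈ Finset.range (n-1), (1 + (l:ℝ)/2 + k)
        ≤ ∏ _k ∈ Finset.range (n-1), ((l:ℝ) + n) := by
          apply Finset.prod_le_prod
          · intro k _; positivity
          · intro k hk
            have hkn : k + 1 ≤ n := by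
              have := Finset.mem_range.mp hk
              omega
            have hk' : (k:ℝ) + 1 ≤ (n:ℝ) := by exact_mod_cast hkn
            have hl : (l:ℝ)/2 ≤ (l:ℝ) := by
              have : (0:ℝ) ≤ (l:ℝ) := Nat.cast_nonneg l
              linarith
            linarith
      _ = ((l:ℝ) + n)^(n-1) := by rw [Finset.prod_const, Finset.card_range]

/-- The value of each term-integral over `t`. -/
lemma integral_F (r : ℝ) (l : ℕ) :
    ∫ t in Ioi (0:ℝ), (r / l.factorial) * (t ^ (-((l:ℝ)/2)) * stableHalf t)
      = r / Real.Gamma ((l:ℝ)/2 + 1) := by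
  rw [integral_const_mul, moment ((l:ℝ)/2) (by positivity)]
  have : r / (l.factorial : ℝ)
      * ((2 * Real.sqrt π)⁻¹ * ((4:ℝ) ^ ((l:ℝ)/2 + 1/2) * Real.Gamma ((l:ℝ)/2 + 1/2)))
      = r * ((2 * Real.sqrt π)⁻¹
        * ((4:ℝ) ^ ((l:ℝ)/2 + 1/2) * Real.Gamma ((l:ℝ)/2 + 1/2)) / l.factorial) := by
    ring
  rw [this, key_const]
  ring

/-- Inner integral expansion. -/
lemma inner_eq {c : ℝ} (hc : 0 ≤ c) :
    ∫ t in Ioi (0:ℝ), Real.exp (-(c * t ^ (-(1/2) : ℝ))) * stableHalf t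
      = ∑' l : ℕ, (-c) ^ l / Real.Gamma ((l:ℝ)/2 + 1) := by
  set F : ℕ → ℝ → ℝ :=
    fun l t => ((-c)^l / l.factorial) * (t ^ (-((l:ℝ)/2)) * stableHalf t) with hF
  have hpt : ∀ t ∈ Ioi (0:ℝ),
      Real.exp (-(c * t ^ (-(1/2):ℝ))) * stableHalf t = ∑' l, F l t := by
    intro t ht
    rw [real_exp_tsum, ← tsum_mul_right]
    congr 1
    funext l
    have h1 : (-(c * t ^ (-(1/2):ℝ)))^l = (-c)^l * t ^ (-((l:ℝ)/2)) := by
      rw [show -(c * t ^ (-(1/2):ℝ)) = (-c) * t ^ (-(1/2):ℝ) by ring, mul_pow,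
        ← Real.rpow_natCast (t ^ (-(1/2):ℝ)) l, ← Real.rpow_mul ht.out.le]
      congr 1
      ring_nf
    rw [h1]
    simp only [hF]
    ring
  rw [setIntegral_congr_fun measurableSet_Ioi hpt]
  have hFint : ∀ l, Integrable (F l) (volume.restrict (Ioi (0:ℝ))) := by
    intro l
    exact (moment_integrable ((l:ℝ)/2) (by positivity)).const_mul _
  have hnorm : ∀ l, (∫ t in Ioi (0:ℝ), ‖F l t‖)
      = c^l / Real.Gamma ((l:ℝ)/2 + 1) := by
    intro l
    rw [← integral_F (c^l) l]
    apply setIntegral_congr_fun measurableSet_Ioi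
    intro t ht
    simp only [hF, Real.norm_eq_abs, abs_mul, abs_div, abs_pow, abs_neg,
      abs_of_nonneg hc, Nat.abs_cast,
      abs_of_nonneg (Real.rpow_nonneg ht.out.le _),
      abs_of_nonneg (stableHalf_nonneg ht.out.le)]
  have hFsum : Summable (fun l => ∫ t in Ioi (0:ℝ), ‖F l t‖) := by
    apply (ml_summable hc).congr
    intro l
    rw [hnorm l]
  rw [← MeasureTheory.integral_tsum_of_summable_integral_norm hFint hFsum]
  apply tsum_congr
  intro l
  exact integral_F ((-c)^l) l

lemma gamma_int (b : ℝ) (hb : 0 < b) :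
    ∫ s in Ioi (0:ℝ), s ^ (b-1) * Real.exp (-s) = Real.Gamma b := by
  rw [Real.Gamma_eq_integral hb]
  apply setIntegral_congr_fun measurableSet_Ioi
  intro s hs
  ring

lemma gamma_int_integrable (b : ℝ) (hb : 0 < b) :
    IntegrableOn (fun s : ℝ => s ^ (b-1) * Real.exp (-s)) (Ioi (0:ℝ)) := by
  apply (Real.GammaIntegral_convergent hb).congr_fun _ measurableSet_Ioi
  intro s hs
  ring

/-- Let n ≥ 1 be an integer and let y > 1.  Then
∑_{l=0}^∞ (Γ(n+l/2)/Γ(1+l/2)) (−1/y)^l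
  = ∫₀^∞ ∫₀^∞ s^{n−1} e^{−s − y^{−1} s^{1/2} t^{−1/2}} f_{1/2}(t) dt ds,
and the series on the left converges absolutely. -/
theorem stmt12 (n : ℕ) (hn : 1 ≤ n) (y : ℝ) (hy : 1 < y) :
    Summable (fun l : ℕ =>
      |Real.Gamma ((n : ℝ) + l / 2) / Real.Gamma (1 + l / 2) * (-1 / y) ^ l|) ∧
    ∑' l : ℕ, Real.Gamma ((n : ℝ) + l / 2) / Real.Gamma (1 + l / 2) * (-1 / y) ^ l
      = ∫ s in Ioi (0:ℝ), ∫ t in Ioi (0:ℝ),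
          s ^ (n - 1) *
            Real.exp (-s - y⁻¹ * s ^ ((1:ℝ) / 2) * t ^ (-(1 / 2) : ℝ)) * stableHalf t := by
  have hy0 : (0:ℝ) < y := lt_trans one_pos hy
  have hr0 : (0:ℝ) ≤ 1/y := by positivity
  have hr1 : 1/y < 1 := by rw [div_lt_one hy0]; exact hy
  have habs : ∀ l : ℕ,
      |Real.Gamma ((n : ℝ) + l / 2) / Real.Gamma (1 + l / 2) * (-1 / y) ^ l|
        = Real.Gamma ((n : ℝ) + l / 2) / Real.Gamma (1 + l / 2) * (1 / y) ^ l := by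
    intro l
    have hg1 : 0 < Real.Gamma ((n : ℝ) + l / 2) := Real.Gamma_pos_of_pos (by positivity)
    have hg2 : 0 < Real.Gamma (1 + (l:ℝ) / 2) := Real.Gamma_pos_of_pos (by positivity)
    rw [abs_mul, abs_pow, abs_div, abs_of_pos hg1, abs_of_pos hg2,
      abs_div, abs_neg, abs_one, abs_of_pos hy0]
  have hsum1 : Summable (fun l : ℕ =>
      |Real.Gamma ((n : ℝ) + l / 2) / Real.Gamma (1 + l / 2) * (-1 / y) ^ l|) := by
    apply (part1 n hn hr0 hr1).congr
    intro l
    rw [habs l]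
  refine ⟨hsum1, ?_⟩
  -- the G-functions
  set G : ℕ → ℝ → ℝ := fun l s =>
    ((-1/y)^l / Real.Gamma ((l:ℝ)/2 + 1)) * (s ^ ((n:ℝ) + l/2 - 1) * Real.exp (-s)) with hG
  -- inner integral identity
  have hinner : ∀ s ∈ Ioi (0:ℝ),
      (∫ t in Ioi (0:ℝ), s ^ (n - 1) *
          Real.exp (-s - y⁻¹ * s ^ ((1:ℝ) / 2) * t ^ (-(1 / 2) : ℝ)) * stableHalf t)
        = ∑' l, G l s := by
    intro s hs
    have hs0 : (0:ℝ) < s := hs.out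
    set c : ℝ := y⁻¹ * s ^ ((1:ℝ)/2) with hc
    have hc0 : 0 ≤ c := by positivity
    have step1 : (∫ t in Ioi (0:ℝ), s ^ (n - 1) *
          Real.exp (-s - y⁻¹ * s ^ ((1:ℝ) / 2) * t ^ (-(1 / 2) : ℝ)) * stableHalf t)
        = (s ^ (n-1) * Real.exp (-s)) *
          ∫ t in Ioi (0:ℝ), Real.exp (-(c * t ^ (-(1/2) : ℝ))) * stableHalf t := by
      rw [← integral_const_mul]
      apply setIntegral_congr_fun measurableSet_Ioi
      intro t ht
      have h0 : -s - y⁻¹ * s ^ ((1:ℝ)/2) * t ^ (-(1/2):ℝ)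
          = (-s) + (-(c * t ^ (-(1/2):ℝ))) := by rw [hc]; ring
      beta_reduce
      rw [h0, Real.exp_add]
      ring
    rw [step1, inner_eq hc0, ← tsum_mul_left]
    apply tsum_congr
    intro l
    have hpow : (-c)^l = (-1/y)^l * s ^ ((l:ℝ)/2) := by
      rw [show -c = (-1/y) * s ^ ((1:ℝ)/2) by rw [hc]; ring, mul_pow,
        ← Real.rpow_natCast (s ^ ((1:ℝ)/2)) l, ← Real.rpow_mul hs0.le]
      congr 1
      ring_nf
    have hsp : (s : ℝ) ^ (n-1) = s ^ ((n:ℝ) - 1) := by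
      rw [← Real.rpow_natCast s (n-1), Nat.cast_sub hn, Nat.cast_one]
    have hsplit : s ^ ((n:ℝ) + (l:ℝ)/2 - 1) = s ^ ((n:ℝ) - 1) * s ^ ((l:ℝ)/2) := by
      rw [← Real.rpow_add hs0]
      congr 1
      ring
    simp only [hG]
    rw [hpow, hsplit, hsp]
    ring
  rw [setIntegral_congr_fun measurableSet_Ioi hinner]
  -- interchange over s
  have hGint : ∀ l, Integrable (G l) (volume.restrict (Ioi (0:ℝ))) := by
    intro l
    exact (gamma_int_integrable ((n:ℝ) + l/2) (by positivity)).const_mul _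
  have hGnorm : ∀ l, (∫ s in Ioi (0:ℝ), ‖G l s‖)
      = Real.Gamma ((n : ℝ) + l / 2) / Real.Gamma (1 + (l:ℝ) / 2) * (1 / y) ^ l := by
    intro l
    have hg2 : 0 < Real.Gamma ((l:ℝ)/2 + 1) := Real.Gamma_pos_of_pos (by positivity)
    have habs2 : |(-1/y)^l / Real.Gamma ((l:ℝ)/2 + 1)|
        = (1/y)^l / Real.Gamma ((l:ℝ)/2 + 1) := by
      rw [abs_div, abs_pow, abs_div, abs_neg, abs_one, abs_of_pos hy0, abs_of_pos hg2]
    have : (∫ s in Ioi (0:ℝ), ‖G l s‖)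
        = ((1/y)^l / Real.Gamma ((l:ℝ)/2 + 1)) *
          ∫ s in Ioi (0:ℝ), s ^ (((n:ℝ) + l/2) - 1) * Real.exp (-s) := by
      rw [← integral_const_mul]
      apply setIntegral_congr_fun measurableSet_Ioi
      intro s hs
      simp only [hG, Real.norm_eq_abs, abs_mul, habs2,
        abs_of_nonneg (Real.rpow_nonneg hs.out.le _), abs_of_nonneg (Real.exp_nonneg _)]
    rw [this, gamma_int ((n:ℝ) + l/2) (by positivity), add_comm ((l:ℝ)/2) 1]
    ring
  have hGsum : Summable (fun l => ∫ s in Ioi (0:ℝ), ‖G l s‖) := by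
    apply (part1 n hn hr0 hr1).congr
    intro l
    rw [hGnorm l]
  rw [← MeasureTheory.integral_tsum_of_summable_integral_norm hGint hGsum]
  apply tsum_congr
  intro l
  simp only [hG]
  rw [integral_const_mul, gamma_int ((n:ℝ) + l/2) (by positivity), add_comm ((l:ℝ)/2) 1]
  ring
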